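/- If G : C → D is a monadic and comonadic functor and D is finitely complete and cartesian closed, then C is finitely complete and cartesian closed; moreover G reflects exponentiable objects, i.e., if G(W) is exponentiable in D then W is exponentiable in C. -/

import Mathlib

/-!
If `G : C ⥤ D` is a monadic and comonadic functor and `D` is finitely complete and cartesian
closed, then `C` is finitely complete and cartesian closed; moreover `G` reflects
exponentiable objects: if `G(W)` is exponentiable in `D` then `W` is exponentiable in `C`.
-/

universe v₁ v₂ u₁ u₂

open CategoryTheory CategoryTheory.Limits MonoidalCategory

/-- Auxiliary lemma: under the hypotheses, `W` is exponentiable whenever `G.obj W` is. -/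
noncomputable def exponentiableOfExponentiableImage
    {C : Type u₁} [Category.{v₁} C] {D : Type u₂} [Category.{v₂} D]
    (G : C ⥤ D) [MonadicRightAdjoint G] [ComonadicLeftAdjoint G]
    [HasFiniteLimits C] [CartesianMonoidalCategory C] [CartesianMonoidalCategory D]
    (W : C) (h : Closed (G.obj W)) : Closed W := by
  haveI : PreservesLimitsOfSize.{0, 0} G :=
    (monadicAdjunction G).rightAdjoint_preservesLimits
  haveI : (tensorLeft W ⋙ G).IsLeftAdjoint := by
    have iso : tensorLeft W ⋙ G ≅ G ⋙ tensorLeft (G.obj W) :=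
      CartesianMonoidalCategory.prodComparisonNatIso G W
    haveI : (G ⋙ tensorLeft (G.obj W)).IsLeftAdjoint :=
      ((comonadicAdjunction G).comp h.adj).isLeftAdjoint
    exact ((Adjunction.ofIsLeftAdjoint (G ⋙ tensorLeft (G.obj W))).ofNatIsoLeft
      iso.symm).isLeftAdjoint
  haveI : (tensorLeft W).IsLeftAdjoint := isLeftAdjoint_triangle_lift_comonadic G
  exact Closed.mk _ (Adjunction.ofIsLeftAdjoint (tensorLeft W))

theorem monadic_comonadic_reflects_cartesian_closed
    {C : Type u₁} [Category.{v₁} C] {D : Type u₂} [Category.{v₂} D]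
    (G : C ⥤ D) [MonadicRightAdjoint G] [ComonadicLeftAdjoint G]
    [HasFiniteLimits D] [CartesianMonoidalCategory D] [MonoidalClosed D] :
    HasFiniteLimits C ∧
    (∀ [CartesianMonoidalCategory C], Nonempty (MonoidalClosed C)) ∧
    (∀ [CartesianMonoidalCategory C] (W : C), Closed (G.obj W) → Nonempty (Closed W)) := by
  haveI := monadicCreatesLimits G
  haveI : HasFiniteLimits C := by
    constructor
    intro J _ _
    exact hasLimitsOfShape_of_hasLimitsOfShape_createsLimitsOfShape G
  refine ⟨inferInstance, ?_, ?_⟩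
  · intro _
    exact ⟨MonoidalClosed.mk fun W => exponentiableOfExponentiableImage G W inferInstance⟩
  · intro _ W h
    exact ⟨exponentiableOfExponentiableImage G W h⟩
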